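/- For every vector (a,b)^T ∈ Z², the minimal weight wt(a,b) of a representation in base M = [[-1,1],[0,-1]] with digits {(0,1)^T, (0,0)^T} belongs to {|b|, |b|+2, |b|+4}. -/

import Mathlib

/-- The Jordan block `[[-1,1],[0,-1]]`. -/
def M2 : Matrix (Fin 2) (Fin 2) ℤ := !![-1, 1; 0, -1]

/-- The digit `p = (0,1)ᵀ`. -/
def pd : Fin 2 → ℤ := ![0, 1]

/-- The zero digit `z = (0,0)ᵀ`. -/
def zd : Fin 2 → ℤ := ![0, 0]

/-- The vector represented by the word `d_{k-1} … d_0`, namely `∑ M^i d_i`. -/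
def val2 {k : ℕ} (d : Fin k → (Fin 2 → ℤ)) : Fin 2 → ℤ :=
  ∑ i : Fin k, (M2 ^ (i : ℕ)).mulVec (d i)

/-- The set of weights (numbers of nonzero digits) of representations of `(a,b)ᵀ`
in base `M2` with digits `{p, z}`. -/
def RepWeights (a b : ℤ) : Set ℕ :=
  {w : ℕ | ∃ (k : ℕ) (d : Fin k → (Fin 2 → ℤ)),
    (∀ i, d i = pd ∨ d i = zd) ∧ val2 d = ![a, b] ∧
    (Finset.univ.filter (fun i : Fin k => d i = pd)).card = w}

lemma zd_eq_zero : zd = 0 := by funext i; fin_cases i <;> rfl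

lemma pd_ne_zd : pd ≠ zd := by
  intro h; have := congrFun h 1; simp [pd, zd] at this

lemma Mpow_pd (i : ℕ) :
    (M2 ^ i).mulVec pd = ![(-1:ℤ)^(i+1) * i, (-1:ℤ)^i] := by
  induction i with
  | zero =>
      funext j; fin_cases j <;> simp [pd, Matrix.one_mulVec]
  | succ n ih =>
      rw [pow_succ', ← Matrix.mulVec_mulVec, ih]
      funext j; fin_cases j <;>
        simp [M2, Matrix.mulVec, dotProduct, Fin.sum_univ_two, pow_succ] <;> ring

lemma Mpow_zd (i : ℕ) : (M2 ^ i).mulVec zd = 0 := by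
  rw [zd_eq_zero, Matrix.mulVec_zero]

lemma finset_mem_repweights (S : Finset ℕ) :
    S.card ∈ RepWeights (∑ i ∈ S, (-1:ℤ)^(i+1) * i) (∑ i ∈ S, (-1:ℤ)^i) := by
  classical
  set k := (S.sup id) + 1 with hk
  have hsub : S ⊆ Finset.range k := by
    intro j hj
    exact Finset.mem_range.2 (Nat.lt_succ_of_le (Finset.le_sup (f := id) hj))
  refine ⟨k, fun i => if (i:ℕ) ∈ S then pd else zd, fun i => by dsimp only; split <;> simp, ?_, ?_⟩
  · funext j
    have : val2 (fun i : Fin k => if (i:ℕ) ∈ S then pd else zd) j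
        = ∑ i : Fin k, ((M2 ^ (i:ℕ)).mulVec (if (i:ℕ) ∈ S then pd else zd)) j := by
      simp [val2, Finset.sum_apply]
    rw [this]
    have hterm : ∀ i : Fin k,
        ((M2 ^ (i:ℕ)).mulVec (if (i:ℕ) ∈ S then pd else zd)) j
        = (if (i:ℕ) ∈ S then (![(-1:ℤ)^((i:ℕ)+1) * (i:ℕ), (-1:ℤ)^(i:ℕ)] j) else 0) := by
      intro i
      split
      · rw [Mpow_pd]
      · rw [Mpow_zd]; rfl
    rw [Finset.sum_congr rfl (fun i _ => hterm i)]
    rw [Fin.sum_univ_eq_sum_range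
      (fun n => if n ∈ S then (![(-1:ℤ)^(n+1) * n, (-1:ℤ)^n] j) else 0) k]
    rw [Finset.sum_ite_mem, Finset.inter_eq_right.2 hsub]
    fin_cases j <;> simp [Finset.sum_apply]
  · have hpred : ∀ i : Fin k,
        ((if (i:ℕ) ∈ S then pd else zd) = pd) ↔ (i:ℕ) ∈ S := by
      intro i
      by_cases h : (i:ℕ) ∈ S
      · simp [h]
      · simp only [h, if_neg, if_false, iff_false]
        intro hzp; exact pd_ne_zd hzp.symm
    rw [show (Finset.univ.filter fun i : Fin k => (if (i:ℕ) ∈ S then pd else zd) = pd)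
        = Finset.univ.filter (fun i : Fin k => (i:ℕ) ∈ S) from Finset.filter_congr (by
          intro i _; exact hpred i)]
    rw [Finset.card_filter]
    rw [Fin.sum_univ_eq_sum_range (fun n => if n ∈ S then 1 else 0) k]
    rw [Finset.sum_ite_mem, Finset.inter_eq_right.2 hsub]
    simp

lemma pair_spec (m : ℕ) (r : ℤ) (hr : Odd r) :
    ∃ P : Finset ℕ, P.card = 2 ∧ (∀ i ∈ P, 2*m ≤ i ∧ i ≤ 2*m + 3 * r.natAbs) ∧
      (∑ i ∈ P, (-1:ℤ)^i) = 0 ∧ (∑ i ∈ P, (-1:ℤ)^(i+1) * i) = r := by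
  classical
  set t := r.natAbs with ht
  have hrt : r = (t:ℤ) ∨ r = -(t:ℤ) := Int.natAbs_eq r
  set E : ℕ := 2*m + 2*t with hE
  have hEnn : (0:ℤ) ≤ (E:ℤ) + r := by rcases hrt with h | h <;> push_cast [hE] <;> omega
  set O : ℕ := ((E:ℤ) + r).toNat with hO
  have hOz : (O:ℤ) = (E:ℤ) + r := Int.toNat_of_nonneg hEnn
  have hEeven : Even E := ⟨m + t, by omega⟩
  have hOodd : Odd O := by
    have : Odd ((O:ℤ)) := by rw [hOz]; exact (Even.add_odd (by exact_mod_cast hEeven.natCast) hr)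
    exact_mod_cast this
  have hEO : E ≠ O := by
    intro h; rw [h] at hEeven; exact (Nat.not_even_iff_odd.2 hOodd) hEeven
  refine ⟨{E, O}, ?_, ?_, ?_, ?_⟩
  · rw [Finset.card_insert_of_notMem (by simpa using hEO), Finset.card_singleton]
  · intro i hi
    rcases Finset.mem_insert.1 hi with h | h
    · subst h; constructor <;> omega
    · have h' : i = O := Finset.mem_singleton.1 h
      subst h'
      constructor <;> [skip; skip] <;> rcases hrt with h | h <;> omega
  · rw [Finset.sum_pair hEO, hEeven.neg_one_pow, hOodd.neg_one_pow]; ring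
  · rw [Finset.sum_pair hEO]
    have h1 : (-1:ℤ)^(E+1) = -1 := (Odd.neg_one_pow (by exact hEeven.add_one))
    have h2 : (-1:ℤ)^(O+1) = 1 := (Even.neg_one_pow (by exact hOodd.add_one))
    rw [h1, h2]
    push_cast [hOz]
    ring

lemma base_even (n : ℕ) :
    ∃ B : Finset ℕ, B.card = n ∧ (∀ i ∈ B, i < 2*n) ∧
      (∑ i ∈ B, (-1:ℤ)^i) = n ∧ ∃ c : ℤ, (∑ i ∈ B, (-1:ℤ)^(i+1) * i) = 2*c := by
  classical
  have hinj : Function.Injective (fun j : ℕ => 2*j) := fun a b h => by dsimp at h; omega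
  refine ⟨(Finset.range n).image (fun j => 2*j),
    by rw [Finset.card_image_of_injective _ hinj, Finset.card_range], ?_, ?_, ?_⟩
  · intro i hi
    rcases Finset.mem_image.1 hi with ⟨j, hj, rfl⟩
    have := Finset.mem_range.1 hj; omega
  · rw [Finset.sum_image (fun a _ b _ h => hinj h)]
    have : ∀ j ∈ Finset.range n, (-1:ℤ)^(2*j) = 1 := by
      intro j _; exact Even.neg_one_pow ⟨j, by omega⟩
    rw [Finset.sum_congr rfl this]; simp
  · refine ⟨-(∑ j ∈ Finset.range n, (j:ℤ)), ?_⟩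
    rw [Finset.sum_image (fun a _ b _ h => hinj h)]
    have : ∀ j ∈ Finset.range n, (-1:ℤ)^(2*j+1) * (2*j : ℕ) = -(2*(j:ℤ)) := by
      intro j _
      rw [Odd.neg_one_pow ⟨j, by omega⟩]; push_cast; ring
    rw [Finset.sum_congr rfl this]
    rw [← Finset.sum_neg_distrib, Finset.mul_sum]
    congr 1; funext j; ring

lemma base_odd (n : ℕ) :
    ∃ B : Finset ℕ, B.card = n ∧ (∀ i ∈ B, i < 2*n) ∧
      (∑ i ∈ B, (-1:ℤ)^i) = -n ∧ ∃ c : ℤ, (∑ i ∈ B, (-1:ℤ)^(i+1) * i) = 2*c + n := by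
  classical
  have hinj : Function.Injective (fun j : ℕ => 2*j+1) := fun a b h => by dsimp at h; omega
  refine ⟨(Finset.range n).image (fun j => 2*j+1),
    by rw [Finset.card_image_of_injective _ hinj, Finset.card_range], ?_, ?_, ?_⟩
  · intro i hi
    rcases Finset.mem_image.1 hi with ⟨j, hj, rfl⟩
    have := Finset.mem_range.1 hj; omega
  · rw [Finset.sum_image (fun a _ b _ h => hinj h)]
    have : ∀ j ∈ Finset.range n, (-1:ℤ)^(2*j+1) = -1 := by
      intro j _; exact Odd.neg_one_pow ⟨j, by omega⟩
    rw [Finset.sum_congr rfl this]; simp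
  · refine ⟨(∑ j ∈ Finset.range n, (j:ℤ)), ?_⟩
    rw [Finset.sum_image (fun a _ b _ h => hinj h)]
    have : ∀ j ∈ Finset.range n, (-1:ℤ)^(2*j+1+1) * ((2*j+1 : ℕ):ℤ) = 2*(j:ℤ) + 1 := by
      intro j _
      rw [Even.neg_one_pow ⟨j+1, by omega⟩]; push_cast; ring
    rw [Finset.sum_congr rfl this, Finset.sum_add_distrib, Finset.mul_sum]
    simp

lemma tail_spec (n : ℕ) (r : ℤ) :
    ∃ P : Finset ℕ, P.card ≤ 4 ∧ (∀ i ∈ P, 2*n ≤ i) ∧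
      (∑ i ∈ P, (-1:ℤ)^i) = 0 ∧ (∑ i ∈ P, (-1:ℤ)^(i+1) * i) = r := by
  rcases Int.even_or_odd r with he | ho
  · obtain ⟨P1, hc1, hb1, hs1, ha1⟩ := pair_spec n 1 ⟨0, by ring⟩
    obtain ⟨P2, hc2, hb2, hs2, ha2⟩ := pair_spec (n+2) (r-1) (by obtain ⟨t, rfl⟩ := he; exact ⟨t - 1, by ring⟩)
    have hdisj : Disjoint P1 P2 := by
      rw [Finset.disjoint_left]
      intro i h1 h2
      have b1 := hb1 i h1
      have b2 := (hb2 i h2).1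
      simp only [Int.natAbs_one] at b1
      omega
    refine ⟨P1 ∪ P2, ?_, ?_, ?_, ?_⟩
    · rw [Finset.card_union_of_disjoint hdisj, hc1, hc2]
    · intro i hi
      rcases Finset.mem_union.1 hi with h | h
      · exact (hb1 i h).1
      · have := (hb2 i h).1; omega
    · rw [Finset.sum_union hdisj, hs1, hs2]; ring
    · rw [Finset.sum_union hdisj, ha1, ha2]; ring
  · obtain ⟨P, hc, hb, hs, ha⟩ := pair_spec n r ho
    exact ⟨P, by omega, fun i hi => (hb i hi).1, hs, ha⟩

lemma exists_low_weight (a b : ℤ) : ∃ w ∈ RepWeights a b, w ≤ b.natAbs + 4 := by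
  classical
  set n := b.natAbs with hn
  rcases le_or_gt 0 b with hb | hb
  · have hnb : (n:ℤ) = b := Int.natAbs_of_nonneg hb
    obtain ⟨B, hBc, hBlt, hBs, c, hBa⟩ := base_even n
    obtain ⟨P, hPc, hPge, hPs, hPa⟩ := tail_spec n (a - 2*c)
    have hdisj : Disjoint B P := by
      rw [Finset.disjoint_left]
      intro i h1 h2
      have := hBlt i h1; have := hPge i h2; omega
    refine ⟨(B ∪ P).card, ?_, ?_⟩
    · have h := finset_mem_repweights (B ∪ P)
      rwa [Finset.sum_union hdisj, Finset.sum_union hdisj, hBs, hBa, hPs, hPa, hnb,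
        show 2*c + (a - 2*c) = a by ring, show b + 0 = b by ring] at h
    · rw [Finset.card_union_of_disjoint hdisj, hBc]; omega
  · have hnb : (n:ℤ) = -b := by omega
    obtain ⟨B, hBc, hBlt, hBs, c, hBa⟩ := base_odd n
    obtain ⟨P, hPc, hPge, hPs, hPa⟩ := tail_spec n (a - (2*c + n))
    have hdisj : Disjoint B P := by
      rw [Finset.disjoint_left]
      intro i h1 h2
      have := hBlt i h1; have := hPge i h2; omega
    refine ⟨(B ∪ P).card, ?_, ?_⟩
    · have h := finset_mem_repweights (B ∪ P)
      rwa [Finset.sum_union hdisj, Finset.sum_union hdisj, hBs, hBa, hPs, hPa,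
        show 2*c + (n:ℤ) + (a - (2*c + n)) = a by ring,
        show -(n:ℤ) + 0 = b by rw [hnb]; ring] at h
    · rw [Finset.card_union_of_disjoint hdisj, hBc]; omega

lemma weight_lower (a b : ℤ) {w : ℕ} (hw : w ∈ RepWeights a b) :
    b.natAbs ≤ w ∧ w % 2 = b.natAbs % 2 := by
  classical
  obtain ⟨k, d, hd, hval, hcard⟩ := hw
  set T := Finset.univ.filter (fun i : Fin k => d i = pd) with hT
  have hb : b = ∑ i ∈ T, (-1:ℤ)^(i:ℕ) := by
    have h1 : (val2 d) 1 = b := by rw [hval]; rfl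
    have h2 : (val2 d) 1 = ∑ i : Fin k, ((M2 ^ (i:ℕ)).mulVec (d i)) 1 := by
      simp [val2, Finset.sum_apply]
    have h3 : ∀ i : Fin k, ((M2 ^ (i:ℕ)).mulVec (d i)) 1
        = (if d i = pd then (-1:ℤ)^(i:ℕ) else 0) := by
      intro i
      rcases hd i with h | h
      · rw [h, if_pos rfl, Mpow_pd]; rfl
      · rw [h, if_neg (fun hh => pd_ne_zd hh.symm), Mpow_zd]; rfl
    rw [← h1, h2, Finset.sum_congr rfl (fun i _ => h3 i), ← Finset.sum_filter]
  constructor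
  · have habs : |b| ≤ (T.card : ℤ) := by
      rw [hb]
      calc |∑ i ∈ T, (-1:ℤ)^(i:ℕ)| ≤ ∑ i ∈ T, |(-1:ℤ)^(i:ℕ)| := Finset.abs_sum_le_sum_abs _ _
        _ = ∑ i ∈ T, 1 := by
            refine Finset.sum_congr rfl (fun i _ => ?_)
            rw [abs_pow, abs_neg, abs_one, one_pow]
        _ = (T.card : ℤ) := by simp
    rw [← hcard]
    exact_mod_cast (Int.abs_eq_natAbs b ▸ habs)
  · have hzm : ((b : ZMod 2)) = (T.card : ZMod 2) := by
      rw [hb]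
      push_cast
      have : ∀ i ∈ T, ((-1 : ZMod 2))^(i:ℕ) = 1 := by
        intro i _
        rw [show ((-1 : ZMod 2)) = 1 from by decide, one_pow]
      rw [Finset.sum_congr rfl this]
      simp
    have hzm2 : ((b.natAbs : ZMod 2)) = (w : ZMod 2) := by
      rcases Int.natAbs_eq b with h | h
      · rw [← hcard, ← hzm]
        conv_rhs => rw [h]
        norm_cast
        rw [Int.abs_eq_natAbs, Int.cast_natCast]
      · rw [← hcard, ← hzm]
        have hb' : (b : ZMod 2) = -(b.natAbs : ZMod 2) := by
          conv_lhs => rw [h]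
          norm_cast
        rw [hb', show ∀ x : ZMod 2, -x = x from by decide]
    have := (ZMod.natCast_eq_natCast_iff _ _ _).1 hzm2
    exact this.symm

theorem stmt18 (a b : ℤ) :
    sInf (RepWeights a b) ∈ ({b.natAbs, b.natAbs + 2, b.natAbs + 4} : Set ℕ) := by
  obtain ⟨w, hw, hwle⟩ := exists_low_weight a b
  have hne : (RepWeights a b).Nonempty := ⟨w, hw⟩
  have hmem := Nat.sInf_mem hne
  have hlow := weight_lower a b hmem
  have hle : sInf (RepWeights a b) ≤ w := Nat.sInf_le hw
  simp only [Set.mem_insert_iff, Set.mem_singleton_iff]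
  omega
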